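/- Every matroid complex is vertex-decomposable. -/

import Mathlib

set_option synthInstance.maxHeartbeats 1000000
set_option maxHeartbeats 1000000
open MvPolynomial

/-- An abstract simplicial complex on the vertex set `Fin n`. -/
structure SComplex (n : ℕ) where
  faces : Set (Finset (Fin n))
  down_closed : ∀ {F G : Finset (Fin n)}, G ∈ faces → F ⊆ G → F ∈ faces

namespace SComplex

variable {n : ℕ}

/-- The link of a vertex `k`. -/
def link (Δ : SComplex n) (k : Fin n) : SComplex n where
  faces := {G | k ∉ G ∧ G ∈ Δ.faces ∧ insert k G ∈ Δ.faces}
  down_closed := by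
    intro F G hG hFG
    exact ⟨fun h => hG.1 (hFG h), Δ.down_closed hG.2.1 hFG,
      Δ.down_closed hG.2.2 (Finset.insert_subset_insert k hFG)⟩

/-- The deletion of a vertex `k`. -/
def del (Δ : SComplex n) (k : Fin n) : SComplex n where
  faces := {G | G ∈ Δ.faces ∧ k ∉ G}
  down_closed := by
    intro F G hG hFG
    exact ⟨Δ.down_closed hG.1 hFG, fun h => hG.2 (hFG h)⟩

/-- `Δ` is a cone with apex `k`. -/
def IsCone (Δ : SComplex n) (k : Fin n) : Prop :=
  ∀ F ∈ Δ.faces, insert k F ∈ Δ.faces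

def IsFacet (Δ : SComplex n) (G : Finset (Fin n)) : Prop :=
  G ∈ Δ.faces ∧ ∀ H ∈ Δ.faces, G ⊆ H → H = G

/-- A complex is pure if all facets have the same cardinality. -/
def Pure (Δ : SComplex n) : Prop :=
  ∀ G H : Finset (Fin n), Δ.IsFacet G → Δ.IsFacet H → G.card = H.card

/-- One more than the dimension of `Δ`: the largest cardinality of a face. -/
noncomputable def dimSucc (Δ : SComplex n) : ℕ :=
  sSup {d | ∃ F ∈ Δ.faces, F.card = d}

/-- `Δ` is a (possibly empty) simplex: its faces are all subsets of a fixed set. -/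
def IsSimplex (Δ : SComplex n) : Prop :=
  ∃ F : Finset (Fin n), Δ.faces = {G | G ⊆ F}

/-- Restriction of `Δ` to a subset `W` of the vertices. -/
def restriction (Δ : SComplex n) (W : Finset (Fin n)) : SComplex n where
  faces := {F | F ∈ Δ.faces ∧ F ⊆ W}
  down_closed := by
    intro F G hG hFG
    exact ⟨Δ.down_closed hG.1 hFG, hFG.trans hG.2⟩

/-- A matroid complex: every restriction is pure. -/
def IsMatroid (Δ : SComplex n) : Prop :=
  ∀ W : Finset (Fin n), (Δ.restriction W).Pure

/-- A shifted complex. -/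
def IsShifted (Δ : SComplex n) : Prop :=
  ∀ F ∈ Δ.faces, ∀ j ∈ F, ∀ i : Fin n, j < i → i ∉ F →
    insert i (F.erase j) ∈ Δ.faces

/-- Vertex-decomposability of a (pure) simplicial complex. -/
inductive VertexDecomposable : SComplex n → Prop
  | simplex (Δ : SComplex n) : Δ.IsSimplex → VertexDecomposable Δ
  | singleton (Δ : SComplex n) : Δ.faces = {∅} → VertexDecomposable Δ
  | step (Δ : SComplex n) (k : Fin n) :
      (Δ.link k).Pure → (Δ.del k).Pure →
      VertexDecomposable (Δ.link k) → VertexDecomposable (Δ.del k) →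
      Δ.dimSucc = (Δ.del k).dimSucc → Δ.dimSucc = (Δ.link k).dimSucc + 1 →
      VertexDecomposable Δ

/-- The cone over `Δ` with a new apex `Fin.last n`. -/
def coneC (Δ : SComplex n) : SComplex (n + 1) where
  faces := {G | ∃ F ∈ Δ.faces, G ⊆ insert (Fin.last n) (F.image Fin.castSucc)}
  down_closed := by
    rintro F G ⟨F', hF', hsub⟩ hFG
    exact ⟨F', hF', hFG.trans hsub⟩

end SComplex

section Algebra

variable (K : Type*) [Field K] {n : ℕ}

/-- The squarefree monomial `x_F = ∏_{i ∈ F} x_i`. -/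
noncomputable def xF (F : Finset (Fin n)) : MvPolynomial (Fin n) K := ∏ i ∈ F, X i

/-- The Stanley–Reisner ideal of `Δ`. -/
noncomputable def SRIdeal (Δ : SComplex n) : Ideal (MvPolynomial (Fin n) K) :=
  Ideal.span {p | ∃ F : Finset (Fin n), F ∉ Δ.faces ∧ p = xF K F}

/-- The ideal `(x_F : F ⊆ [n] \ {k}, F ∉ Γ)`, i.e. the Stanley–Reisner ideal of the
cone with apex `k` over the subcomplex `Γ`. -/
noncomputable def coneIdeal (Γ : SComplex n) (k : Fin n) : Ideal (MvPolynomial (Fin n) K) :=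
  Ideal.span {p | ∃ F : Finset (Fin n), k ∉ F ∧ F ∉ Γ.faces ∧ p = xF K F}

/-- The depth of `S/I`: the maximal length of a regular sequence on `S/I` consisting of
elements of the irrelevant maximal ideal (elements with zero constant term). -/
noncomputable def quotDepth (I : Ideal (MvPolynomial (Fin n) K)) : ℕ :=
  sSup {d | ∃ rs : List (MvPolynomial (Fin n) K), rs.length = d ∧
    (∀ p ∈ rs, constantCoeff p = 0) ∧
    RingTheory.Sequence.IsRegular (MvPolynomial (Fin n) K ⧸ I)
      (rs.map (Ideal.Quotient.mk I))}

/-- `S/I` is a Cohen–Macaulay ring: its depth equals its Krull dimension. -/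
def IsCMQuot (I : Ideal (MvPolynomial (Fin n) K)) : Prop :=
  (quotDepth K I : WithBot ℕ∞) = ringKrullDim (MvPolynomial (Fin n) K ⧸ I)

/-- The height (codimension) of an ideal. -/
noncomputable def idealHeight (I : Ideal (MvPolynomial (Fin n) K)) : ℕ∞ :=
  ⨅ (P : PrimeSpectrum (MvPolynomial (Fin n) K)) (_ : I ≤ P.asIdeal), Order.height P

/-- `I` is unmixed: all associated primes of `S/I` have the same height, that of `I`. -/
def UnmixedIdeal (I : Ideal (MvPolynomial (Fin n) K)) : Prop :=
  ∀ P ∈ associatedPrimes (MvPolynomial (Fin n) K) (MvPolynomial (Fin n) K ⧸ I),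
    idealHeight K P = idealHeight K I

/-- The simplicial complex `Δ` is Cohen–Macaulay over `K`. -/
def IsCMComplex (Δ : SComplex n) : Prop :=
  IsCMQuot K (SRIdeal K Δ)

/-- Weak vertex-decomposability (over the field `K`). -/
inductive WeaklyVD : SComplex n → Prop
  | singleton (Δ : SComplex n) : Δ.faces = {∅} → WeaklyVD Δ
  | cone (Δ : SComplex n) (k : Fin n) : Δ.Pure → Δ.faces.Nonempty → Δ.IsCone k →
      WeaklyVD (Δ.del k) → WeaklyVD Δ
  | step (Δ : SComplex n) (k : Fin n) : Δ.Pure → Δ.faces.Nonempty →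
      WeaklyVD (Δ.link k) → IsCMComplex K (Δ.del k) →
      (Δ.del k).dimSucc = Δ.dimSucc → WeaklyVD Δ

/-- `Δ` is 2-CM (doubly Cohen–Macaulay) over `K`. -/
def Is2CM (Δ : SComplex n) : Prop :=
  IsCMComplex K Δ ∧ ∀ k : Fin n, {k} ∈ Δ.faces →
    IsCMComplex K (Δ.del k) ∧ (Δ.del k).dimSucc = Δ.dimSucc

end Algebra


namespace SComplex

variable {n : ℕ}

theorem facet_congr' {Δ₁ Δ₂ : SComplex n} (h : Δ₁.faces = Δ₂.faces) {G : Finset (Fin n)} :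
    Δ₁.IsFacet G ↔ Δ₂.IsFacet G := by unfold IsFacet; rw [h]

theorem pure_congr' {Δ₁ Δ₂ : SComplex n} (h : Δ₁.faces = Δ₂.faces)
    (hp : Δ₁.Pure) : Δ₂.Pure := fun G H hG hH =>
  hp G H ((facet_congr' h).2 hG) ((facet_congr' h).2 hH)

theorem exists_facet' (Δ : SComplex n) {F : Finset (Fin n)} (hF : F ∈ Δ.faces) :
    ∃ G, Δ.IsFacet G ∧ F ⊆ G := by
  obtain ⟨G, ⟨hG, hFG⟩, hmax⟩ := Set.Finite.exists_maximalFor Finset.card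
    {G | G ∈ Δ.faces ∧ F ⊆ G} (Set.toFinite _) ⟨F, hF, subset_rfl⟩
  refine ⟨G, ⟨hG, fun H hH hGH => ?_⟩, hFG⟩
  exact (Finset.eq_of_subset_of_card_le hGH
    (hmax (j := H) ⟨hH, hFG.trans hGH⟩ (Finset.card_le_card hGH))).symm

theorem IsMatroid.pure' {Δ : SComplex n} (h : Δ.IsMatroid) : Δ.Pure := by
  have he : (Δ.restriction Finset.univ).faces = Δ.faces := by
    ext G; simp [restriction]
  exact pure_congr' he (h Finset.univ)

theorem del_restriction_faces (Δ : SComplex n) (k : Fin n) (W : Finset (Fin n)) :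
    ((Δ.del k).restriction W).faces = (Δ.restriction (W.erase k)).faces := by
  ext G
  simp only [del, restriction, Set.mem_setOf_eq, Finset.subset_erase]
  tauto

theorem IsMatroid.del' {Δ : SComplex n} (h : Δ.IsMatroid) (k : Fin n) :
    (Δ.del k).IsMatroid :=
  fun W => pure_congr' (del_restriction_faces Δ k W).symm (h (W.erase k))

theorem restriction_restriction_faces (Δ : SComplex n) (W₁ W₂ : Finset (Fin n)) :
    ((Δ.restriction W₁).restriction W₂).faces = (Δ.restriction (W₁ ∩ W₂)).faces := by
  ext G
  simp only [restriction, Set.mem_setOf_eq, Finset.subset_inter_iff]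
  tauto

theorem IsMatroid.restriction' {Δ : SComplex n} (h : Δ.IsMatroid) (V : Finset (Fin n)) :
    (Δ.restriction V).IsMatroid :=
  fun W => pure_congr' (restriction_restriction_faces Δ V W).symm (h (V ∩ W))

/-- Every facet of the link at `k` comes from a facet of `Δ` containing `k`. -/
theorem link_facet {Δ : SComplex n} {k : Fin n} {G : Finset (Fin n)}
    (hG : (Δ.link k).IsFacet G) : Δ.IsFacet (insert k G) ∧ k ∉ G := by
  obtain ⟨⟨hkG, hGΔ, hiG⟩, hmax⟩ := hG
  obtain ⟨Hf, hHf, hsub⟩ := Δ.exists_facet' hiG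
  have hkH : k ∈ Hf := hsub (Finset.mem_insert_self k G)
  have herase : Hf.erase k ∈ (Δ.link k).faces := by
    refine ⟨Finset.notMem_erase k Hf, Δ.down_closed hHf.1 (Finset.erase_subset k Hf), ?_⟩
    rw [Finset.insert_erase hkH]
    exact hHf.1
  have hGsub : G ⊆ Hf.erase k :=
    Finset.subset_erase.2 ⟨(Finset.subset_insert k G).trans hsub, hkG⟩
  have heq : Hf.erase k = G := hmax _ herase hGsub
  have heq2 : Hf = insert k G := by rw [← heq, Finset.insert_erase hkH]
  exact ⟨heq2 ▸ hHf, hkG⟩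

theorem pure_link' {Δ : SComplex n} (hp : Δ.Pure) (k : Fin n) : (Δ.link k).Pure := by
  intro G H hG hH
  obtain ⟨hGf, hkG⟩ := link_facet hG
  obtain ⟨hHf, hkH⟩ := link_facet hH
  have hc := hp _ _ hGf hHf
  rwa [Finset.card_insert_of_notMem hkG, Finset.card_insert_of_notMem hkH,
    Nat.succ_inj] at hc

theorem link_restriction_faces (Δ : SComplex n) (k : Fin n) (W : Finset (Fin n)) :
    ((Δ.link k).restriction W).faces =
      ((Δ.restriction (insert k (W.erase k))).link k).faces := by
  ext G
  simp only [link, restriction, Set.mem_setOf_eq]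
  constructor
  · rintro ⟨⟨hk, hG, hiG⟩, hW⟩
    have hGe : G ⊆ W.erase k := Finset.subset_erase.2 ⟨hW, hk⟩
    exact ⟨hk, ⟨hG, hGe.trans (Finset.subset_insert _ _)⟩,
      hiG, Finset.insert_subset_insert k hGe⟩
  · rintro ⟨hk, ⟨hG, hGW⟩, hiG, -⟩
    have hGe : G ⊆ W.erase k := by
      intro x hx
      rcases Finset.mem_insert.1 (hGW hx) with h | h
      · exact absurd (h ▸ hx) hk
      · exact h
    exact ⟨⟨hk, hG, hiG⟩, hGe.trans (Finset.erase_subset k W)⟩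

theorem IsMatroid.link' {Δ : SComplex n} (h : Δ.IsMatroid) (k : Fin n) :
    (Δ.link k).IsMatroid := by
  intro W
  exact pure_congr' (link_restriction_faces Δ k W).symm
    (pure_link' (h.restriction' (insert k (W.erase k))).pure' k)

theorem dimSucc_eq' {Δ : SComplex n} {d : ℕ} (h1 : ∃ F ∈ Δ.faces, F.card = d)
    (h2 : ∀ F ∈ Δ.faces, F.card ≤ d) : Δ.dimSucc = d := by
  obtain ⟨F, hF, hFd⟩ := h1
  have hbdd : d ∈ upperBounds {d | ∃ F ∈ Δ.faces, F.card = d} := by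
    rintro b ⟨G, hG, rfl⟩; exact h2 G hG
  exact le_antisymm (csSup_le ⟨d, F, hF, hFd⟩ hbdd) (le_csSup ⟨d, hbdd⟩ ⟨F, hF, hFd⟩)

theorem card_le_of_pure' {Δ : SComplex n} (hp : Δ.Pure) {H : Finset (Fin n)}
    (hH : Δ.IsFacet H) : ∀ F ∈ Δ.faces, F.card ≤ H.card := by
  intro F hF
  obtain ⟨G, hG, hFG⟩ := Δ.exists_facet' hF
  calc F.card ≤ G.card := Finset.card_le_card hFG
    _ = H.card := hp G H hG hH

theorem matroid_vd_aux : ∀ N : ℕ, ∀ Δ : SComplex n, Δ.faces.ncard ≤ N →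
    Δ.IsMatroid → ∅ ∈ Δ.faces → VertexDecomposable Δ := by
  intro N
  induction N with
  | zero =>
    intro Δ h hm hne
    have := (Set.ncard_pos (Set.toFinite _)).2 ⟨∅, hne⟩
    omega
  | succ N ih =>
    intro Δ hcard hmat hne
    have hpure : Δ.Pure := hmat.pure'
    by_cases hsimp : ∀ k : Fin n, {k} ∈ Δ.faces → ∀ G, Δ.IsFacet G → k ∈ G
    · -- Δ is a simplex on the facet H
      obtain ⟨H, hH, -⟩ := Δ.exists_facet' hne
      apply VertexDecomposable.simplex
      refine ⟨H, ?_⟩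
      ext G
      constructor
      · intro hG v hv
        exact hsimp v (Δ.down_closed hG (Finset.singleton_subset_iff.2 hv)) H hH
      · intro hG
        exact Δ.down_closed hH.1 hG
    · push_neg at hsimp
      obtain ⟨k, hkv, G, hGfacet, hkG⟩ := hsimp
      -- a facet containing k
      obtain ⟨H, hHf, hkH'⟩ := Δ.exists_facet' hkv
      have hkH : k ∈ H := hkH' (Finset.mem_singleton_self k)
      have hGH : G.card = H.card := hpure G H hGfacet hHf
      have hbound := card_le_of_pure' hpure hHf
      -- dimensions
      have hdimΔ : Δ.dimSucc = H.card := dimSucc_eq' ⟨H, hHf.1, rfl⟩ hbound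
      have hdimdel : (Δ.del k).dimSucc = H.card :=
        dimSucc_eq' ⟨G, ⟨hGfacet.1, hkG⟩, hGH⟩ (fun F hF => hbound F hF.1)
      have hHpos : 0 < H.card := Finset.card_pos.2 ⟨k, hkH⟩
      have hdimlink : (Δ.link k).dimSucc = H.card - 1 := by
        apply dimSucc_eq'
        · refine ⟨H.erase k, ⟨Finset.notMem_erase k H,
            Δ.down_closed hHf.1 (Finset.erase_subset k H), ?_⟩,
            Finset.card_erase_of_mem hkH⟩
          rw [Finset.insert_erase hkH]
          exact hHf.1
        · rintro F ⟨hkF, -, hiF⟩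
          have := hbound _ hiF
          rw [Finset.card_insert_of_notMem hkF] at this
          omega
      -- strict decrease of number of faces
      have hdelss : (Δ.del k).faces ⊂ Δ.faces := by
        rw [Set.ssubset_iff_of_subset (fun F hF => hF.1)]
        exact ⟨{k}, hkv, fun h => h.2 (Finset.mem_singleton_self k)⟩
      have hlinkss : (Δ.link k).faces ⊂ Δ.faces := by
        rw [Set.ssubset_iff_of_subset (fun F hF => hF.2.1)]
        exact ⟨{k}, hkv, fun h => h.1 (Finset.mem_singleton_self k)⟩
      have hdelcard : (Δ.del k).faces.ncard ≤ N := by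
        have := Set.ncard_lt_ncard hdelss (Set.toFinite _)
        omega
      have hlinkcard : (Δ.link k).faces.ncard ≤ N := by
        have := Set.ncard_lt_ncard hlinkss (Set.toFinite _)
        omega
      have hnedel : ∅ ∈ (Δ.del k).faces := ⟨hne, Finset.notMem_empty k⟩
      have hnelink : ∅ ∈ (Δ.link k).faces :=
        ⟨Finset.notMem_empty k, hne, by simpa using hkv⟩
      exact VertexDecomposable.step Δ k (pure_link' hpure k) (hmat.del' k).pure'
        (ih _ hlinkcard (hmat.link' k) hnelink)
        (ih _ hdelcard (hmat.del' k) hnedel)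
        (by omega) (by omega)

end SComplex

/-- every matroid complex is vertex-decomposable. -/
theorem matroid_vertexDecomposable {n : ℕ} (Δ : SComplex n)
    (hmat : Δ.IsMatroid) (hne : ∅ ∈ Δ.faces) :
    SComplex.VertexDecomposable Δ :=
  SComplex.matroid_vd_aux Δ.faces.ncard Δ le_rfl hmat hne
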